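/- A tree T of height λ, where cf(λ) > ℵ₁, all of whose levels are countable, has at most ℵ₀ many cofinal branches. -/

import Mathlib

open Set Cardinal

/-- A tree, presented by its strict order and a level function. -/
structure OrdTree where
  carrier : Type
  lt : carrier → carrier → Prop
  level : carrier → Ordinal.{0}

/-- `T` is a tree of height `lam`. -/
def OrdTree.IsOfHeight (T : OrdTree) (lam : Ordinal.{0}) : Prop :=
  (∀ x y z, T.lt x y → T.lt y z → T.lt x z) ∧
  (∀ x, ¬ T.lt x x) ∧
  (∀ x y, T.lt x y → T.level x < T.level y) ∧
  (∀ y, ∀ α < T.level y, ∃! x, T.lt x y ∧ T.level x = α) ∧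
  (∀ x y z, T.lt x z → T.lt y z → (x = y ∨ T.lt x y ∨ T.lt y x)) ∧
  (∀ x, T.level x < lam) ∧ (∀ α < lam, ∃ x, T.level x = α)

/-- A tree of height `lam` with `cf(lam) > ℵ₁` all of whose levels are countable has
at most countably many cofinal branches (chains meeting every level). -/
theorem stmt17 (lam : Ordinal.{0}) (hcof : Cardinal.aleph 1 < lam.cof)
    (T : OrdTree) (hT : T.IsOfHeight lam)
    (hcount : ∀ α < lam, {x : T.carrier | T.level x = α}.Countable) :
    {B : Set T.carrier |
      (∀ x ∈ B, ∀ y ∈ B, x = y ∨ T.lt x y ∨ T.lt y x) ∧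
      ∀ α < lam, ∃ x ∈ B, T.level x = α}.Countable := by
  set S : Set (Set T.carrier) := {B : Set T.carrier |
      (∀ x ∈ B, ∀ y ∈ B, x = y ∨ T.lt x y ∨ T.lt y x) ∧
      ∀ α < lam, ∃ x ∈ B, T.level x = α} with hSdef
  obtain ⟨htrans, hirr, hmono, hpred, hcomp, hltlam, hsurj⟩ := hT
  by_contra hS
  -- lam is positive
  have hlam0 : (0 : Ordinal) < lam := by
    rcases eq_zero_or_pos lam with h | h
    · exfalso
      rw [h, Ordinal.cof_zero] at hcof
      exact absurd hcof (not_lt.2 zero_le)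
    · exact h
  -- choose the node of each branch at each level
  have hex : ∀ (B : ↥S) (α : {a : Ordinal // a < lam}),
      ∃ x, x ∈ B.1 ∧ T.level x = α.1 := by
    intro B α
    obtain ⟨x, hx, hlv⟩ := B.2.2 α.1 α.2
    exact ⟨x, hx, hlv⟩
  choose nd hmem hlev using hex
  -- uniqueness per level in a branch
  have huniq : ∀ B ∈ S, ∀ x ∈ B, ∀ y ∈ B, T.level x = T.level y → x = y := by
    intro B hB x hx y hy hxy
    rcases hB.1 x hx y hy with h | h | h
    · exact h
    · exact absurd (hmono _ _ h) (by rw [hxy]; exact lt_irrefl _)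
    · exact absurd (hmono _ _ h) (by rw [hxy]; exact lt_irrefl _)
  -- comparable elements with smaller level are below
  have hltof : ∀ B ∈ S, ∀ x ∈ B, ∀ y ∈ B, T.level x < T.level y → T.lt x y := by
    intro B hB x hx y hy hxy
    rcases hB.1 x hx y hy with h | h | h
    · exact absurd hxy (by rw [h]; exact lt_irrefl _)
    · exact h
    · exact absurd (hmono _ _ h) (not_lt.2 hxy.le)
  -- downward agreement
  have hdown : ∀ (B B' : ↥S) (α β : {a : Ordinal // a < lam}),
      α.1 ≤ β.1 → nd B β = nd B' β → nd B α = nd B' α := by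
    intro B B' α β hle heq
    rcases lt_or_eq_of_le hle with hlt | heqa
    · have h1 : T.lt (nd B α) (nd B β) :=
        hltof B.1 B.2 _ (hmem B α) _ (hmem B β)
          (by rw [hlev B α, hlev B β]; exact hlt)
      have h2 : T.lt (nd B' α) (nd B β) := by
        rw [heq]
        exact hltof B'.1 B'.2 _ (hmem B' α) _ (hmem B' β)
          (by rw [hlev B' α, hlev B' β]; exact hlt)
      obtain ⟨z, _, hz⟩ := hpred (nd B β) α.1 (by rw [hlev B β]; exact hlt)
      rw [hz _ ⟨h1, hlev B α⟩, hz _ ⟨h2, hlev B' α⟩]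
    · -- same level
      have h1 : nd B α = nd B β :=
        huniq B.1 B.2 _ (hmem B α) _ (hmem B β)
          (by rw [hlev B α, hlev B β, heqa])
      have h2 : nd B' α = nd B' β :=
        huniq B'.1 B'.2 _ (hmem B' α) _ (hmem B' β)
          (by rw [hlev B' α, hlev B' β, heqa])
      rw [h1, h2, heq]
  -- one-sided splitting
  have honeside : ∀ (B B' : ↥S) (x : T.carrier), x ∈ B.1 → x ∉ B'.1 →
      ∃ γ : {a : Ordinal // a < lam}, ∀ β : {a : Ordinal // a < lam},
        γ.1 ≤ β.1 → nd B β ≠ nd B' β := by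
    intro B B' x hx hx'
    refine ⟨⟨T.level x, hltlam x⟩, fun β hle heq => ?_⟩
    have h1 : nd B ⟨T.level x, hltlam x⟩ = nd B' ⟨T.level x, hltlam x⟩ :=
      hdown B B' _ β hle heq
    have h2 : x = nd B ⟨T.level x, hltlam x⟩ :=
      huniq B.1 B.2 x hx _ (hmem B _) (by rw [hlev B _])
    exact hx' (by rw [h2, h1]; exact hmem B' _)
  -- splitting for distinct branches
  have hsplit : ∀ (B B' : ↥S), B ≠ B' →
      ∃ γ : {a : Ordinal // a < lam}, ∀ β : {a : Ordinal // a < lam},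
        γ.1 ≤ β.1 → nd B β ≠ nd B' β := by
    intro B B' hne
    have hne1 : B.1 ≠ B'.1 := fun h => hne (Subtype.ext h)
    rw [ne_eq, Set.Subset.antisymm_iff, not_and_or] at hne1
    rcases hne1 with h | h
    · obtain ⟨x, hx, hx'⟩ := Set.not_subset.1 h
      exact honeside B B' x hx hx'
    · obtain ⟨x, hx, hx'⟩ := Set.not_subset.1 h
      obtain ⟨γ, hγ⟩ := honeside B' B x hx hx'
      exact ⟨γ, fun β hle heq => hγ β hle heq.symm⟩
  -- get aleph 1 many branches
  have hle1 : Cardinal.aleph 1 ≤ #↥S :=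
    not_lt.1 (fun h => hS ((Cardinal.countable_iff_lt_aleph_one S).2 h))
  obtain ⟨f⟩ : Nonempty ((Cardinal.aleph 1).out ↪ ↥S) := by
    have := hle1
    rw [← Cardinal.mk_out (Cardinal.aleph 1)] at this
    exact Cardinal.le_def _ _ |>.1 this
  -- bound the splitting levels
  have hg : ∀ p : (Cardinal.aleph 1).out × (Cardinal.aleph 1).out,
      ∃ γ : {a : Ordinal // a < lam}, f p.1 ≠ f p.2 →
        ∀ β : {a : Ordinal // a < lam}, γ.1 ≤ β.1 → nd (f p.1) β ≠ nd (f p.2) β := by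
    intro p
    by_cases h : f p.1 ≠ f p.2
    · obtain ⟨γ, hγ⟩ := hsplit (f p.1) (f p.2) h
      exact ⟨γ, fun _ => hγ⟩
    · exact ⟨⟨0, hlam0⟩, fun h' => absurd h' h⟩
  choose g hgspec using hg
  have hsup : (⨆ p, (g p).1) < lam := by
    apply Ordinal.iSup_lt_ord _ (fun p => (g p).2)
    have hmk : #((Cardinal.aleph 1).out × (Cardinal.aleph 1).out) = Cardinal.aleph 1 := by
      simp [Cardinal.mul_eq_self (Cardinal.aleph0_le_aleph 1)]
    rw [hmk]
    exact hcof
  set A : {a : Ordinal // a < lam} := ⟨⨆ p, (g p).1, hsup⟩ with hA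
  -- inject aleph 1 into a level
  have hinj : Function.Injective
      (fun i : (Cardinal.aleph 1).out =>
        (⟨nd (f i) A, hlev (f i) A⟩ : {x : T.carrier | T.level x = A.1})) := by
    intro i j hij
    by_contra hne
    have hfne : f i ≠ f j := fun h => hne (f.injective h)
    have hle : (g (i, j)).1 ≤ A.1 := Ordinal.le_iSup (fun p => (g p).1) (i, j)
    exact hgspec (i, j) hfne A hle (congrArg Subtype.val hij)
  have hc : #↥{x : T.carrier | T.level x = A.1} ≤ Cardinal.aleph0 :=
    Cardinal.le_aleph0_iff_set_countable.2 (hcount A.1 A.2)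
  have : Cardinal.aleph 1 ≤ Cardinal.aleph0 := by
    calc Cardinal.aleph 1 = #((Cardinal.aleph 1).out) := (Cardinal.mk_out _).symm
      _ ≤ #↥{x : T.carrier | T.level x = A.1} := Cardinal.mk_le_of_injective hinj
      _ ≤ Cardinal.aleph0 := hc
  exact absurd this (not_le.2 Cardinal.aleph0_lt_aleph_one)
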